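/- Let F be a field and H a subgroup of GL₂(F) that is non-abelian. Then every element g ∈ GL₂(F) commuting with all elements of H is a scalar matrix, i.e., g = c • 1 for some c ∈ Fˣ. Consequently, when F = ZMod p with p prime, every such g has square determinant. -/

import Mathlib

open Matrix

lemma span12 {F : Type*} [Field F] (M A : Matrix (Fin 2) (Fin 2) F)
    (hM : ¬ (M 0 1 = 0 ∧ M 1 0 = 0 ∧ M 0 0 = M 1 1))
    (hA : A * M = M * A) :
    ∃ p t : F, A = p • (1 : Matrix (Fin 2) (Fin 2) F) + t • M := by
  have e := fun i j => congrFun (congrFun hA i) j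
  simp only [Matrix.mul_apply, Fin.sum_univ_two] at e
  have e00 := e 0 0
  have e01 := e 0 1
  have e10 := e 1 0
  by_cases hb : M 0 1 ≠ 0
  · refine ⟨A 0 0 - (A 0 1 / M 0 1) * M 0 0, A 0 1 / M 0 1, ?_⟩
    ext i j
    fin_cases i <;> fin_cases j <;>
      simp only [Fin.isValue, Fin.zero_eta, Fin.mk_one, Matrix.add_apply, Matrix.smul_apply,
        Matrix.one_apply_eq, Matrix.one_apply_ne, Matrix.one_apply_ne', Ne, not_false_iff,
        smul_eq_mul, mul_zero, mul_one, zero_ne_one, one_ne_zero]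
    · field_simp
      ring
    · field_simp
      ring
    · field_simp
      linear_combination -e00
    · field_simp
      linear_combination -e01
  · push_neg at hb
    by_cases hc : M 1 0 ≠ 0
    · refine ⟨A 0 0 - (A 1 0 / M 1 0) * M 0 0, A 1 0 / M 1 0, ?_⟩
      have hq : A 0 1 = 0 := by
        have : A 0 1 * M 1 0 = 0 := by linear_combination e00 + A 1 0 * hb
        exact (mul_eq_zero.mp this).resolve_right hc
      ext i j
      fin_cases i <;> fin_cases j <;>
        simp only [Fin.isValue, Fin.zero_eta, Fin.mk_one, Matrix.add_apply, Matrix.smul_apply,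
          Matrix.one_apply_eq, Matrix.one_apply_ne, Matrix.one_apply_ne', Ne, not_false_iff,
          smul_eq_mul, mul_zero, mul_one, zero_ne_one, one_ne_zero]
      · field_simp
        ring
      · rw [hq, hb]; ring
      · field_simp
        ring
      · field_simp
        linear_combination e10
    · push_neg at hc
      have hd' : M 0 0 - M 1 1 ≠ 0 := sub_ne_zero.mpr (by tauto)
      refine ⟨A 0 0 - ((A 0 0 - A 1 1) / (M 0 0 - M 1 1)) * M 0 0,
        (A 0 0 - A 1 1) / (M 0 0 - M 1 1), ?_⟩
      have hq : A 0 1 = 0 := by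
        have h : A 0 1 * (M 1 1 - M 0 0) = 0 := by
          linear_combination e01 - A 0 0 * hb + A 1 1 * hb
        rcases mul_eq_zero.mp h with h' | h'
        · exact h'
        · exact absurd (by linear_combination -h') hd'
      have hr : A 1 0 = 0 := by
        have h : A 1 0 * (M 0 0 - M 1 1) = 0 := by
          linear_combination e10 + A 0 0 * hc - A 1 1 * hc
        exact (mul_eq_zero.mp h).resolve_right hd'
      ext i j
      fin_cases i <;> fin_cases j <;>
        simp only [Fin.isValue, Fin.zero_eta, Fin.mk_one, Matrix.add_apply, Matrix.smul_apply,
          Matrix.one_apply_eq, Matrix.one_apply_ne, Matrix.one_apply_ne', Ne, not_false_iff,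
          smul_eq_mul, mul_zero, mul_one, zero_ne_one, one_ne_zero]
      · field_simp
        ring
      · rw [hq, hb]; ring
      · rw [hr, hc]; ring
      · field_simp
        ring

theorem stmt3 (F : Type*) [Field F] (H : Subgroup (GL (Fin 2) F))
    (hH : ∃ h₁ ∈ H, ∃ h₂ ∈ H, h₁ * h₂ ≠ h₂ * h₁)
    (g : GL (Fin 2) F) (hg : ∀ h ∈ H, g * h = h * g) :
    ∃ c : Fˣ, (g : Matrix (Fin 2) (Fin 2) F) = (c : F) • (1 : Matrix (Fin 2) (Fin 2) F)
      ∧ IsSquare (g : Matrix (Fin 2) (Fin 2) F).det := by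
  have hsc : ∃ c : F, (g : Matrix (Fin 2) (Fin 2) F) = c • (1 : Matrix (Fin 2) (Fin 2) F) := by
    by_contra hsc
    push_neg at hsc
    obtain ⟨h₁, hm1, h₂, hm2, hne⟩ := hH
    set M : Matrix (Fin 2) (Fin 2) F := (g : Matrix (Fin 2) (Fin 2) F) with hM
    have hnons : ¬ (M 0 1 = 0 ∧ M 1 0 = 0 ∧ M 0 0 = M 1 1) := by
      rintro ⟨h1, h2, h3⟩
      apply hsc (M 0 0)
      ext i j
      fin_cases i <;> fin_cases j <;>
        simp_all [Matrix.smul_apply, Matrix.one_apply]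
    have comm : ∀ h ∈ H, (h : Matrix (Fin 2) (Fin 2) F) * M = M * h := by
      intro h hh
      have := congrArg Units.val (hg h hh)
      simpa [Units.val_mul] using this.symm
    obtain ⟨p, t, hA⟩ := span12 M _ hnons (comm h₁ hm1)
    obtain ⟨q, u, hB⟩ := span12 M _ hnons (comm h₂ hm2)
    apply hne
    ext : 1
    show (h₁ : Matrix (Fin 2) (Fin 2) F) * h₂ = (h₂ : Matrix (Fin 2) (Fin 2) F) * h₁
    rw [hA, hB]
    simp only [add_mul, mul_add, smul_mul_assoc, mul_smul_comm, smul_smul, one_mul, mul_one]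
    module
  obtain ⟨c, hc⟩ := hsc
  have hdet : (g : Matrix (Fin 2) (Fin 2) F).det ≠ 0 := by
    have : IsUnit (g : Matrix (Fin 2) (Fin 2) F) := g.isUnit
    exact ((Matrix.isUnit_iff_isUnit_det _).mp this).ne_zero
  have hc0 : c ≠ 0 := by
    rintro rfl
    simp [hc, Matrix.det_smul] at hdet
  refine ⟨Units.mk0 c hc0, by simpa using hc, ⟨c, ?_⟩⟩
  rw [hc]
  simp [Matrix.det_smul]
  ring
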